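/- For every h ∈ ℕ there is a constant C(h) such that every Arnoux-Rauzy word over d letters whose directive sequence (α_{i_n})_{n∈ℕ} satisfies {i_n, i_{n+1}, …, i_{n+h−1}} = {1,…,d} for all n ∈ ℕ is C(h)-balanced. -/

import Mathlib

def prefixW {A : Type*} (w : ℕ → A) (n : ℕ) : List A := (List.range n).map w

def IsFactor {A : Type*} (w : ℕ → A) (u : List A) : Prop :=
  ∃ k, u = (List.range u.length).map (fun t => w (k + t))

def applySub {A : Type*} (σ : A → List A) (w : List A) : List A := w.flatMap σ

def SubstOfInf {A : Type*} (σ : A → List A) (w' w : ℕ → A) : Prop :=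
  ∀ m, prefixW w (applySub σ (prefixW w' m)).length = applySub σ (prefixW w' m)

def FactorOfImage {A : Type*} (σ : A → List A) (ω : ℕ → A) (u : List A) : Prop :=
  ∃ w, IsFactor ω w ∧ u <:+: applySub σ w

def BalancedWord {A : Type*} [DecidableEq A] (C : ℕ) (w : ℕ → A) : Prop :=
  ∀ u v, IsFactor w u → IsFactor w v → u.length = v.length →
    ∀ i, |(u.count i : ℤ) - (v.count i : ℤ)| ≤ (C : ℤ)

def ARsub (d : ℕ) (i : Fin d) : Fin d → List (Fin d) := fun j => if j = i then [i] else [i, j]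


namespace AR9


lemma prefixW_length {A : Type*} (w : ℕ → A) (n : ℕ) : (prefixW w n).length = n := by
  simp [prefixW]

lemma prefixW_succ {A : Type*} (w : ℕ → A) (n : ℕ) :
    prefixW w (n + 1) = prefixW w n ++ [w n] := by
  simp [prefixW, List.range_succ]

lemma prefixW_getElem {A : Type*} (w : ℕ → A) (n t : ℕ) (ht : t < n) :
    (prefixW w n)[t]'(by simpa [prefixW_length] using ht) = w t := by
  simp [prefixW]

lemma prefixW_add {A : Type*} (w : ℕ → A) (a b : ℕ) :
    prefixW w (a + b) = prefixW w a ++ (List.range b).map (fun t => w (a + t)) := by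
  simp [prefixW, List.range_add, Function.comp]

lemma sum_count {d : ℕ} (l : List (Fin d)) : ∑ j, l.count j = l.length := by
  induction l with
  | nil => simp
  | cons x l ih =>
    simp only [List.count_cons, List.length_cons]
    rw [Finset.sum_add_distrib, ih]
    simp [Finset.sum_ite_eq]

lemma ARsub_eq {d : ℕ} (a y : Fin d) : ARsub d a y = a :: (if y = a then [] else [y]) := by
  unfold ARsub; split <;> rfl

lemma applySub_append {A : Type*} (σ : A → List A) (X Y : List A) :
    applySub σ (X ++ Y) = applySub σ X ++ applySub σ Y := by
  simp [applySub]

lemma applySub_prefixW_succ {A : Type*} (σ : A → List A) (w : ℕ → A) (t : ℕ) :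
    applySub σ (prefixW w (t + 1)) = applySub σ (prefixW w t) ++ σ (w t) := by
  rw [prefixW_succ, applySub_append]; simp [applySub]

lemma count_ARsub {d : ℕ} (a y j : Fin d) :
    (ARsub d a y).count j = (if j = a then 1 else 0) + (if j = y ∧ y ≠ a then 1 else 0) := by
  unfold ARsub
  by_cases hya : y = a <;> by_cases hja : j = a <;> by_cases hjy : j = y <;>
    simp_all [List.count_cons, List.count_singleton, eq_comm]

lemma count_applySub {d : ℕ} (a j : Fin d) (Y : List (Fin d)) :
    (applySub (ARsub d a) Y).count j = if j = a then Y.length else Y.count j := by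
  induction Y with
  | nil => simp [applySub]
  | cons y Y ih =>
    have : applySub (ARsub d a) (y :: Y) = ARsub d a y ++ applySub (ARsub d a) Y := by
      simp [applySub]
    rw [this, List.count_append, ih, count_ARsub]
    by_cases hja : j = a <;> by_cases hjy : j = y <;> by_cases hya : y = a <;>
      simp_all [List.count_cons] <;> omega

lemma length_applySub {d : ℕ} (a : Fin d) (Y : List (Fin d)) :
    (applySub (ARsub d a) Y).length + Y.count a = 2 * Y.length := by
  induction Y with
  | nil => simp [applySub]
  | cons y Y ih =>
    have : applySub (ARsub d a) (y :: Y) = ARsub d a y ++ applySub (ARsub d a) Y := by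
      simp [applySub]
    rw [this]
    simp only [List.length_append, List.count_cons, List.length_cons]
    have hb : (ARsub d a y).length = if y = a then 1 else 2 := by
      unfold ARsub; split <;> rfl
    by_cases hya : y = a <;> simp_all [hb] <;> omega




variable {d : ℕ}

/-- ℓ¹ norm on `Fin d → ℚ` -/
def nrm1 (x : Fin d → ℚ) : ℚ := ∑ j, |x j|

/-- one desubstitution step on deviation vectors -/
def Tmap (a : Fin d) (f : Fin d → ℚ) (x : Fin d → ℚ) : Fin d → ℚ :=
  fun j => (if j = a then 0 else x j) + x a * f j

/-- error vector -/
def errv (a : Fin d) (f : Fin d → ℚ) (e : ℚ) : Fin d → ℚ :=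
  fun j => e * ((if j = a then 1 else 0) - f j)

lemma nrm1_nonneg (x : Fin d → ℚ) : 0 ≤ nrm1 x :=
  Finset.sum_nonneg fun j _ => abs_nonneg _

lemma nrm1_zero : nrm1 (fun _ : Fin d => (0:ℚ)) = 0 := by simp [nrm1]

lemma abs_le_nrm1 (x : Fin d → ℚ) (j : Fin d) : |x j| ≤ nrm1 x :=
  Finset.single_le_sum (fun k _ => abs_nonneg (x k)) (Finset.mem_univ j)

lemma nrm1_triangle (x y : Fin d → ℚ) : nrm1 (fun j => x j + y j) ≤ nrm1 x + nrm1 y := by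
  unfold nrm1
  rw [← Finset.sum_add_distrib]
  exact Finset.sum_le_sum fun j _ => abs_add_le _ _

lemma sum_Tmap (a : Fin d) (f x : Fin d → ℚ) (hf : ∑ j, f j = 1) :
    ∑ j, Tmap a f x j = ∑ j, x j := by
  unfold Tmap
  rw [Finset.sum_add_distrib, ← Finset.mul_sum, hf]
  have h1 : ∀ j : Fin d, (if j = a then (0:ℚ) else x j) = x j - (if j = a then x j else 0) := by
    intro j; split <;> ring
  simp_rw [h1]
  rw [Finset.sum_sub_distrib]
  simp [Finset.sum_ite_eq']

lemma Tmap_sub (a : Fin d) (f x y : Fin d → ℚ) :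
    Tmap a f (fun j => x j - y j) = fun j => Tmap a f x j - Tmap a f y j := by
  funext j
  unfold Tmap
  split <;> ring

lemma Tmap_zero (a : Fin d) (f : Fin d → ℚ) :
    Tmap a f (fun _ => 0) = fun _ => (0:ℚ) := by
  funext j; unfold Tmap; split <;> ring

/-- coordinatewise move bound -/
lemma Tmap_drift (a : Fin d) (f x : Fin d → ℚ) (hf0 : ∀ j, 0 ≤ f j) (hfs : ∑ j, f j = 1)
    (j : Fin d) : |Tmap a f x j - x j| ≤ |x a| := by
  have hf1 : ∀ k, f k ≤ 1 := by
    intro k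
    rw [← hfs]
    exact Finset.single_le_sum (fun l _ => hf0 l) (Finset.mem_univ k)
  unfold Tmap
  by_cases hja : j = a
  · subst hja
    simp only [eq_self_iff_true, if_true, zero_add]
    rw [show x j * f j - x j = x j * (f j - 1) by ring, abs_mul]
    have : |f j - 1| ≤ 1 := by
      rw [abs_le]; constructor <;> nlinarith [hf0 j, hf1 j]
    nlinarith [abs_nonneg (x j)]
  · simp only [if_neg hja, add_sub_cancel_left, abs_mul]
    nlinarith [abs_nonneg (x a), abs_nonneg (f j), hf0 j, hf1 j, abs_of_nonneg (hf0 j)]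


lemma abs_add_opp {p q : ℚ} (hpq : p * q ≤ 0) : |p + q| ≤ |p| + |q| - 2 * min |p| |q| := by
  rcases le_or_gt 0 p with hp | hp
  · rcases le_or_gt 0 q with hq | hq
    · have h0 : p * q = 0 := le_antisymm hpq (mul_nonneg hp hq)
      rcases mul_eq_zero.mp h0 with h | h <;> subst h <;>
        simp [abs_of_nonneg, hp, hq, abs_nonneg, min_eq_left, min_eq_right]
    · have hq' : q ≤ 0 := le_of_lt hq
      rw [abs_of_nonneg hp, abs_of_nonpos hq']
      rcases le_total p (-q) with hc | hc
      · rw [min_eq_left (by linarith), abs_of_nonpos (by linarith)]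
        linarith
      · rw [min_eq_right (by linarith), abs_of_nonneg (by linarith)]
        linarith
  · rcases le_or_gt 0 q with hq | hq
    · have hp' : p ≤ 0 := le_of_lt hp
      rw [abs_of_nonpos hp', abs_of_nonneg hq]
      rcases le_total (-p) q with hc | hc
      · rw [min_eq_left (by linarith), abs_of_nonneg (by linarith)]
        linarith
      · rw [min_eq_right (by linarith), abs_of_nonpos (by linarith)]
        linarith
    · nlinarith

lemma sum_f_erase (a : Fin d) (f : Fin d → ℚ) (hfs : ∑ j, f j = 1) :
    ∑ j ∈ Finset.univ.erase a, f j = 1 - f a := by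
  rw [Finset.sum_erase_eq_sub (Finset.mem_univ a), hfs]

/-- master per-coordinate estimate summed: with an optional cancellation coordinate -/
lemma Tmap_loss (a b : Fin d) (hba : b ≠ a) (f x : Fin d → ℚ)
    (hf0 : ∀ j, 0 ≤ f j) (hfs : ∑ j, f j = 1) (hopp : x b * x a ≤ 0) :
    nrm1 (Tmap a f x) ≤ nrm1 x - 2 * min |x b| (|x a| * f b) := by
  set M := min |x b| (|x a| * f b) with hM
  have key : ∀ j : Fin d, |Tmap a f x j| ≤
      |x j| + |x a| * f j - (if j = a then |x a| else 0) - (if j = b then 2 * M else 0) := by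
    intro j
    show |(if j = a then 0 else x j) + x a * f j| ≤ _
    rcases eq_or_ne j a with hja | hja
    · subst hja
      rw [if_pos rfl, if_pos rfl, if_neg (show j ≠ b from fun hh => hba hh.symm), zero_add,
        abs_mul, abs_of_nonneg (hf0 j)]
      linarith
    · rcases eq_or_ne j b with hjb | hjb
      · subst hjb
        rw [if_neg hja, if_neg hja, if_pos rfl]
        have hsign : x j * (x a * f j) ≤ 0 := by
          have := mul_le_mul_of_nonneg_right hopp (hf0 j)
          nlinarith
        have h1 : |x j + x a * f j| ≤ |x j| + |x a * f j| - 2 * min |x j| |x a * f j| :=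
          abs_add_opp hsign
        rw [abs_mul, abs_of_nonneg (hf0 j)] at h1
        rw [hM]
        linarith
      · rw [if_neg hja, if_neg hja, if_neg hjb, sub_zero]
        calc |x j + x a * f j| ≤ |x j| + |x a * f j| := abs_add_le _ _
        _ = |x j| + |x a| * f j := by rw [abs_mul, abs_of_nonneg (hf0 j)]
        _ ≤ _ := by linarith [abs_nonneg (x a)]
  calc nrm1 (Tmap a f x) ≤ ∑ j, (|x j| + |x a| * f j - (if j = a then |x a| else 0)
        - (if j = b then 2 * M else 0)) := Finset.sum_le_sum fun j _ => key j
  _ = nrm1 x + |x a| * (∑ j, f j) - |x a| - 2 * M := by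
      rw [Finset.sum_sub_distrib, Finset.sum_sub_distrib, Finset.sum_add_distrib,
        ← Finset.mul_sum]
      simp [nrm1, Finset.sum_ite_eq']
  _ = nrm1 x - 2 * M := by rw [hfs]; ring

lemma Tmap_nonexp (a : Fin d) (f x : Fin d → ℚ)
    (hf0 : ∀ j, 0 ≤ f j) (hfs : ∑ j, f j = 1) :
    nrm1 (Tmap a f x) ≤ nrm1 x := by
  have key : ∀ j : Fin d, |Tmap a f x j| ≤
      |x j| + |x a| * f j - (if j = a then |x a| else 0) := by
    intro j
    unfold Tmap
    by_cases hja : j = a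
    · subst hja
      simp only [eq_self_iff_true, if_true, zero_add, abs_mul, abs_of_nonneg (hf0 j)]
      linarith
    · simp only [if_neg hja, sub_zero]
      calc |x j + x a * f j| ≤ |x j| + |x a * f j| := abs_add_le _ _
      _ = |x j| + |x a| * f j := by rw [abs_mul, abs_of_nonneg (hf0 j)]
  calc nrm1 (Tmap a f x)
      ≤ ∑ j, (|x j| + |x a| * f j - (if j = a then |x a| else 0)) :=
        Finset.sum_le_sum fun j _ => key j
  _ = nrm1 x + |x a| * (∑ j, f j) - |x a| := by
      rw [Finset.sum_sub_distrib, Finset.sum_add_distrib, ← Finset.mul_sum]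
      simp [nrm1, Finset.sum_ite_eq']
  _ = nrm1 x := by rw [hfs]; ring

lemma nrm1_errv (a : Fin d) (f : Fin d → ℚ) (e : ℚ) (he0 : 0 ≤ e) (he1 : e ≤ 1)
    (hf0 : ∀ j, 0 ≤ f j) (hfs : ∑ j, f j = 1) :
    nrm1 (errv a f e) ≤ 2 := by
  have key : ∀ j : Fin d, |errv a f e j| ≤ (if j = a then (1:ℚ) else 0) + f j := by
    intro j
    unfold errv
    rw [abs_mul, abs_of_nonneg he0]
    have h1 : |(if j = a then (1:ℚ) else 0) - f j| ≤ (if j = a then (1:ℚ) else 0) + f j := by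
      rw [abs_sub_comm]
      calc |f j - (if j = a then (1:ℚ) else 0)| ≤ |f j| + |if j = a then (1:ℚ) else 0| :=
            abs_sub _ _
      _ = f j + (if j = a then (1:ℚ) else 0) := by
          rw [abs_of_nonneg (hf0 j)]
          congr 1
          split <;> simp
      _ = _ := by ring
    nlinarith [abs_nonneg ((if j = a then (1:ℚ) else 0) - f j)]
  calc nrm1 (errv a f e) ≤ ∑ j, ((if j = a then (1:ℚ) else 0) + f j) :=
        Finset.sum_le_sum fun j _ => key j
  _ = 1 + 1 := by rw [Finset.sum_add_distrib, hfs]; simp [Finset.sum_ite_eq']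
  _ = 2 := by norm_num


/-- composition of Tmaps along levels n, n+1, ..., n+s-1 (leftmost applied last) -/
def chainT (a : ℕ → Fin d) (F : ℕ → Fin d → ℚ) : ℕ → ℕ → (Fin d → ℚ) → (Fin d → ℚ)
  | _, 0, x => x
  | n, s + 1, x => Tmap (a n) (F n) (chainT a F (n + 1) s x)

lemma chainT_zero (a : ℕ → Fin d) (F : ℕ → Fin d → ℚ) (n : ℕ) (x : Fin d → ℚ) :
    chainT a F n 0 x = x := rfl

lemma chainT_succ (a : ℕ → Fin d) (F : ℕ → Fin d → ℚ) (n s : ℕ) (x : Fin d → ℚ) :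
    chainT a F n (s + 1) x = Tmap (a n) (F n) (chainT a F (n + 1) s x) := rfl

/-- hypotheses on the frequency vectors used in a range -/
def GoodF (F : ℕ → Fin d → ℚ) (n s : ℕ) : Prop :=
  ∀ k, n ≤ k → k < n + s → (∀ j, 0 ≤ F k j) ∧ (∑ j, F k j = 1)

lemma sum_chainT (a : ℕ → Fin d) (F : ℕ → Fin d → ℚ) (n s : ℕ) (x : Fin d → ℚ)
    (hF : GoodF F n s) : ∑ j, chainT a F n s x j = ∑ j, x j := by
  induction s generalizing n with
  | zero => rfl
  | succ s ih =>
    rw [chainT_succ, sum_Tmap _ _ _ (hF n (le_refl n) (by omega)).2]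
    exact ih (n+1) (fun k h1 h2 => hF k (by omega) (by omega))

lemma nrm1_chainT (a : ℕ → Fin d) (F : ℕ → Fin d → ℚ) (n s : ℕ) (x : Fin d → ℚ)
    (hF : GoodF F n s) : nrm1 (chainT a F n s x) ≤ nrm1 x := by
  induction s generalizing n with
  | zero => exact le_refl _
  | succ s ih =>
    rw [chainT_succ]
    calc nrm1 (Tmap (a n) (F n) (chainT a F (n+1) s x))
        ≤ nrm1 (chainT a F (n+1) s x) :=
          Tmap_nonexp _ _ _ (hF n (le_refl n) (by omega)).1 (hF n (le_refl n) (by omega)).2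
    _ ≤ nrm1 x := ih (n+1) (fun k h1 h2 => hF k (by omega) (by omega))

/-- pigeonhole: a zero-sum vector with positive norm has a strictly negative
coordinate of size ≥ nrm1 x / (2d), and similarly a positive one -/
lemma exists_big_neg (x : Fin d → ℚ) (hzs : ∑ j, x j = 0) (hpos : 0 < nrm1 x) :
    ∃ b, x b < 0 ∧ nrm1 x ≤ 2 * d * (-x b) := by
  have hd : 0 < d := by
    by_contra hd
    have hd0 : d = 0 := by omega
    subst hd0
    have : nrm1 x = 0 := by simp [nrm1]
    linarith
  -- ∑ j (|x j| - x j) = nrm1 x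
  have hsum : ∑ j, (|x j| - x j) = nrm1 x := by
    rw [Finset.sum_sub_distrib, hzs, nrm1]; ring
  have hex : ∃ b ∈ Finset.univ, nrm1 x / d ≤ |x b| - x b := by
    apply Finset.exists_le_of_sum_le (Finset.univ_nonempty_iff.mpr ⟨⟨0, hd⟩⟩)
    rw [hsum, Finset.sum_const, Finset.card_univ, Fintype.card_fin, nsmul_eq_mul]
    rw [mul_div_cancel₀]
    positivity
  obtain ⟨b, _, hb⟩ := hex
  have hbneg : x b < 0 := by
    rcases le_or_gt 0 (x b) with hc | hc
    · rw [abs_of_nonneg hc] at hb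
      simp at hb
      have : 0 < nrm1 x / d := by positivity
      linarith
    · exact hc
  refine ⟨b, hbneg, ?_⟩
  rw [abs_of_neg hbneg] at hb
  have h2 : nrm1 x / d ≤ 2 * (-x b) := by linarith
  have h3 : nrm1 x ≤ d * (2 * (-x b)) := by
    rw [div_le_iff₀ (by positivity : (0:ℚ) < d)] at h2
    linarith [h2]
  linarith [h3]

lemma exists_big_opp (x : Fin d → ℚ) (hzs : ∑ j, x j = 0) (hpos : 0 < nrm1 x) (a : Fin d)
    (ha : x a ≠ 0) : ∃ b, x b * x a < 0 ∧ nrm1 x ≤ 2 * d * |x b| := by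
  rcases lt_or_gt_of_ne ha with haneg | hapos
  · -- x a < 0: find big positive coordinate: apply exists_big_neg to -x
    obtain ⟨b, hb1, hb2⟩ := exists_big_neg (fun j => -x j) (by simp [hzs]) (by
      have : nrm1 (fun j => -x j) = nrm1 x := by unfold nrm1; simp
      rw [this]; exact hpos)
    refine ⟨b, ?_, ?_⟩
    · have : 0 < x b := by linarith [hb1]
      nlinarith
    · have hn : nrm1 (fun j => -x j) = nrm1 x := by unfold nrm1; simp
      rw [hn] at hb2
      have : 0 < x b := by simpa using hb1
      rw [abs_of_pos this]
      simpa using hb2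
  · obtain ⟨b, hb1, hb2⟩ := exists_big_neg x hzs hpos
    refine ⟨b, by nlinarith, ?_⟩
    rw [abs_of_neg hb1]
    exact hb2


set_option maxHeartbeats 1000000 in
/-- THE contraction lemma: over a window of length h in which every letter occurs,
the maps `Tmap` contract zero-sum vectors in ℓ¹ by a definite factor. -/
lemma window_contract (a : ℕ → Fin d) (F : ℕ → Fin d → ℚ) (h n : ℕ)
    (hd : 0 < d) (hh : 0 < h) (eps : ℚ) (heps0 : 0 < eps) (heps1 : eps ≤ 1/2)
    (hF : ∀ k, n ≤ k → k < n + h → (∀ j, 0 ≤ F k j) ∧ (∑ j, F k j = 1) ∧ (∀ j, eps ≤ F k j))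
    (hcover : ∀ j : Fin d, ∃ s, s < h ∧ a (n + s) = j)
    (x : Fin d → ℚ) (hzs : ∑ j, x j = 0) :
    nrm1 (chainT a F n h x) ≤ (1 - eps / (2 * d * h)) * nrm1 x := by
  have hdq : (0:ℚ) < d := by exact_mod_cast hd
  have hhq : (0:ℚ) < h := by exact_mod_cast hh
  set δ : ℚ := eps / (2 * d * h) with hδ
  set η : ℚ := 1 / (2 * d * h) with hη
  have hδpos : 0 < δ := by positivity
  have hηpos : 0 < η := by positivity
  have hδη : δ = eps * η := by rw [hδ, hη]; ring
  have hδhalf : δ ≤ 1/4 := by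
    rw [hδ, div_le_iff₀ (by positivity)]
    have h2 : (1:ℚ) ≤ d := by exact_mod_cast hd
    have h3 : (1:ℚ) ≤ h := by exact_mod_cast hh
    nlinarith
  have hGood : GoodF F n h := fun k h1 h2 => ⟨(hF k h1 h2).1, (hF k h1 h2).2.1⟩
  set X := nrm1 x with hX
  have hXnn : 0 ≤ X := nrm1_nonneg x
  rcases eq_or_lt_of_le hXnn with hX0 | hXpos
  · -- degenerate: X = 0
    have h1 : nrm1 (chainT a F n h x) ≤ X := nrm1_chainT a F n h x hGood
    nlinarith
  by_contra hcon
  push_neg at hcon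
  -- the intermediate vectors
  set y : ℕ → (Fin d → ℚ) := fun s => chainT a F (n + s) (h - s) x with hy
  have hyh : y h = x := by simp [hy, chainT_zero]
  have hy0 : y 0 = chainT a F n h x := by simp [hy]
  have hystep : ∀ s, s < h → y s = Tmap (a (n + s)) (F (n + s)) (y (s + 1)) := by
    intro s hs
    show chainT a F (n + s) (h - s) x = _
    have hrw : h - s = (h - (s + 1)) + 1 := by omega
    rw [hrw, chainT_succ]
    rfl
  have hGoodtail : ∀ s, GoodF F (n + s) (h - s) := by
    intro s k h1 h2
    have hk1 : n ≤ k := by omega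
    have hk2 : k < n + h := by omega
    exact ⟨(hF k hk1 hk2).1, (hF k hk1 hk2).2.1⟩
  have hsumy : ∀ s, ∑ j, y s j = 0 := by
    intro s
    rw [hy]
    rw [sum_chainT a F (n+s) (h-s) x (hGoodtail s), hzs]
  have hyle : ∀ s, nrm1 (y s) ≤ X := by
    intro s
    exact nrm1_chainT a F (n+s) (h-s) x (hGoodtail s)
  have hymono : ∀ s, s ≤ h → nrm1 (y 0) ≤ nrm1 (y s) := by
    intro s
    induction s with
    | zero => intro _; exact le_refl _
    | succ s ih =>
      intro hs1
      have hs : s < h := by omega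
      calc nrm1 (y 0) ≤ nrm1 (y s) := ih (by omega)
      _ = nrm1 (Tmap (a (n+s)) (F (n+s)) (y (s+1))) := by rw [hystep s hs]
      _ ≤ nrm1 (y (s+1)) :=
          Tmap_nonexp _ _ _ (hF (n+s) (by omega) (by omega)).1 (hF (n+s) (by omega) (by omega)).2.1
  have hylow : ∀ s, s ≤ h → (1 - δ) * X < nrm1 (y s) := by
    intro s hs
    calc (1 - δ) * X < nrm1 (y 0) := by rw [hy0]; exact hcon
    _ ≤ nrm1 (y s) := hymono s hs
  -- Step 1: at every step the active coordinate is small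
  have hsmall : ∀ s, s < h → |y (s + 1) (a (n + s))| < η * X := by
    intro s hs
    by_contra hbig
    push_neg at hbig
    set x' := y (s + 1) with hx'
    set b0 := a (n + s) with hb0
    have hx'pos : 0 < nrm1 x' := by
      calc (0:ℚ) < (1 - δ) * X := by nlinarith
      _ < nrm1 x' := hylow (s+1) (by omega)
    have hane : x' b0 ≠ 0 := by
      intro hzero
      rw [hzero] at hbig
      simp at hbig
      nlinarith
    obtain ⟨b, hopp, hbbig⟩ := exists_big_opp x' (hsumy (s+1)) hx'pos b0 hane
    have hbne : b ≠ b0 := by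
      intro hh2
      rw [hh2] at hopp
      nlinarith
    have hloss := Tmap_loss b0 b hbne (F (n + s)) x'
      (hF (n+s) (by omega) (by omega)).1 (hF (n+s) (by omega) (by omega)).2.1 (le_of_lt hopp)
    -- the min is at least δ * X
    have hmin : δ * X ≤ min |x' b| (|x' b0| * F (n + s) b) := by
      apply le_min
      · -- |x' b| ≥ nrm1 x'/(2d) ≥ (1-δ)X/(2d) ≥ X/(4d)... ≥ δ X
        have h1 : (1 - δ) * X ≤ 2 * d * |x' b| := le_trans (le_of_lt (hylow (s+1) (by omega))) hbbig
        have h2 : (3/4 : ℚ) * X ≤ 2 * d * |x' b| := by nlinarith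
        -- δ ≤ 1/(4d) * ... : need δ * X ≤ (3/(8d)) X ≤ |x' b|
        have hδd : 2 * d * δ ≤ 3/4 := by
          have e1 : 2 * (d:ℚ) * δ = eps / h := by
            rw [hδ]; field_simp
          rw [e1, div_le_iff₀ hhq]
          have h3 : (1:ℚ) ≤ h := by exact_mod_cast hh
          nlinarith
        have hXb : 0 ≤ |x' b| := abs_nonneg _
        nlinarith
      · have h1 : eps ≤ F (n + s) b := (hF (n+s) (by omega) (by omega)).2.2 b
        have h2 : η * X ≤ |x' b0| := hbig
        have h3 : 0 ≤ |x' b0| := abs_nonneg _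
        calc δ * X = (η * X) * eps := by rw [hδη]; ring
        _ ≤ |x' b0| * F (n + s) b := by
            apply mul_le_mul h2 h1 (le_of_lt heps0) h3
    have hcontr : nrm1 (y s) ≤ X - 2 * (δ * X) := by
      calc nrm1 (y s) = nrm1 (Tmap b0 (F (n+s)) x') := by rw [hystep s hs]
      _ ≤ nrm1 x' - 2 * min |x' b| (|x' b0| * F (n + s) b) := hloss
      _ ≤ X - 2 * (δ * X) := by
          have := hyle (s+1)
          rw [← hx'] at this
          linarith [hmin, this]
    have := hylow s (by omega)
    nlinarith
  -- Step 2: every coordinate of x is small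
  have hcoord : ∀ b : Fin d, |x b| ≤ h * (η * X) := by
    intro b
    obtain ⟨s, hs, hsb⟩ := hcover b
    have hdrift : ∀ t, s + 1 + t ≤ h → |y (s + 1 + t) b| ≤ (η * X) + t * (η * X) := by
      intro t
      induction t with
      | zero =>
        intro _
        simp only [Nat.add_zero, Nat.cast_zero, zero_mul, add_zero]
        rw [← hsb]
        exact le_of_lt (hsmall s hs)
      | succ t ih =>
        intro ht1
        have hs' : s + 1 + t < h := by omega
        have hrel := hystep (s + 1 + t) hs'
        have hd1 : |y (s+1+t) b - y (s+1+t+1) b| ≤ |y (s+1+t+1) (a (n + (s+1+t)))| := by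
          rw [hrel]
          exact Tmap_drift _ _ _ (hF (n+(s+1+t)) (by omega) (by omega)).1
            (hF (n+(s+1+t)) (by omega) (by omega)).2.1 b
        have hd2 : |y (s+1+t+1) (a (n + (s+1+t)))| < η * X := hsmall (s+1+t) hs'
        have ih' := ih (by omega)
        have habs : |y (s+1+(t+1)) b| ≤ |y (s+1+t) b| + η * X := by
          have h4 : |y (s+1+(t+1)) b| ≤ |y (s+1+t) b| + |y (s+1+t) b - y (s+1+t+1) b| := by
            rw [show s+1+(t+1) = s+1+t+1 by omega]
            have := abs_sub_abs_le_abs_sub (y (s+1+t+1) b) (y (s+1+t) b)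
            rw [abs_sub_comm] at this
            linarith [this]
          linarith
        calc |y (s+1+(t+1)) b| ≤ |y (s+1+t) b| + η * X := habs
        _ ≤ (η * X) + t * (η * X) + η * X := by linarith
        _ = (η * X) + (t + 1 : ℕ) * (η * X) := by push_cast; ring
    have hfin := hdrift (h - (s + 1)) (by omega)
    rw [show s + 1 + (h - (s+1)) = h by omega] at hfin
    rw [hyh] at hfin
    calc |x b| ≤ (η * X) + (h - (s+1) : ℕ) * (η * X) := hfin
    _ ≤ h * (η * X) := by
        have h1 : ((h - (s+1) : ℕ) : ℚ) ≤ (h : ℚ) - 1 := by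
          have : (h - (s+1) : ℕ) ≤ h - 1 := by omega
          have h2 : ((h - (s+1) : ℕ) : ℚ) ≤ ((h - 1 : ℕ) : ℚ) := by exact_mod_cast this
          have h3 : ((h - 1 : ℕ) : ℚ) = (h:ℚ) - 1 := by
            have : (1:ℕ) ≤ h := hh
            push_cast [this]
            ring
          linarith
        have h4 : 0 ≤ η * X := by positivity
        nlinarith
  -- Step 3: contradiction
  have hfinal : X ≤ d * (h * (η * X)) := by
    calc X = ∑ b, |x b| := by rw [hX, nrm1]
    _ ≤ ∑ _b : Fin d, h * (η * X) := Finset.sum_le_sum fun b _ => hcoord b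
    _ = d * (h * (η * X)) := by
        rw [Finset.sum_const, Finset.card_univ, Fintype.card_fin, nsmul_eq_mul]
  have : d * (h * (η * X)) = X / 2 := by
    rw [hη]
    field_simp
  nlinarith


/-- one matrix step on (to-be-normalized) frequency vectors -/
def Mstep (a : Fin d) (v : Fin d → ℚ) : Fin d → ℚ := fun j => if j = a then ∑ k, v k else v j

/-- frequency-style vectors built downward from level N (s = distance below N) -/
def fseqAux (i : ℕ → Fin d) (N : ℕ) : ℕ → Fin d → ℚ
  | 0 => fun _ => (d : ℚ)⁻¹
  | s + 1 => fun j =>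
      Mstep (i (N - (s+1))) (fseqAux i N s) j / (∑ k, Mstep (i (N - (s+1))) (fseqAux i N s) k)

def fseq (i : ℕ → Fin d) (N n : ℕ) : Fin d → ℚ := fseqAux i N (N - n)

lemma sum_Mstep (a : Fin d) (v : Fin d → ℚ) (hs : ∑ j, v j = 1) :
    ∑ j, Mstep a v j = 2 - v a := by
  have h1 : ∀ j : Fin d, Mstep a v j = v j + (if j = a then 1 - v a else 0) := by
    intro j
    unfold Mstep
    split
    · rename_i hja; rw [hja, hs]; ring
    · ring
  simp_rw [h1]
  rw [Finset.sum_add_distrib, hs, Finset.sum_ite_eq' Finset.univ a (fun _ => 1 - v a)]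
  simp
  ring

lemma fseqAux_inv (i : ℕ → Fin d) (N : ℕ) (hd : 0 < d) :
    ∀ s, (∀ j, 0 < fseqAux i N s j) ∧ (∑ j, fseqAux i N s j = 1) := by
  intro s
  induction s with
  | zero =>
    constructor
    · intro j
      show (0:ℚ) < (d : ℚ)⁻¹
      have : (0:ℚ) < d := by exact_mod_cast hd
      positivity
    · show ∑ _j : Fin d, (d:ℚ)⁻¹ = 1
      rw [Finset.sum_const, Finset.card_univ, Fintype.card_fin, nsmul_eq_mul]
      field_simp
  | succ s ih =>
    obtain ⟨hpos, hsum⟩ := ih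
    set a := i (N - (s+1))
    set v := fseqAux i N s
    have hva : v a ≤ 1 := by
      rw [← hsum]
      exact Finset.single_le_sum (fun k _ => le_of_lt (hpos k)) (Finset.mem_univ a)
    have hc : ∑ k, Mstep a v k = 2 - v a := sum_Mstep a v hsum
    have hcpos : 0 < ∑ k, Mstep a v k := by rw [hc]; linarith
    constructor
    · intro j
      show 0 < Mstep a v j / (∑ k, Mstep a v k)
      apply div_pos _ hcpos
      unfold Mstep
      split
      · rw [hsum]; norm_num
      · exact hpos j
    · show ∑ j, Mstep a v j / (∑ k, Mstep a v k) = 1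
      rw [← Finset.sum_div]
      field_simp

lemma fseq_pos (i : ℕ → Fin d) (N : ℕ) (hd : 0 < d) (n : ℕ) (j : Fin d) :
    0 < fseq i N n j := (fseqAux_inv i N hd (N - n)).1 j

lemma fseq_sum (i : ℕ → Fin d) (N : ℕ) (hd : 0 < d) (n : ℕ) :
    ∑ j, fseq i N n j = 1 := (fseqAux_inv i N hd (N - n)).2

lemma fseq_le_one (i : ℕ → Fin d) (N : ℕ) (hd : 0 < d) (n : ℕ) (j : Fin d) :
    fseq i N n j ≤ 1 := by
  rw [← fseq_sum i N hd n]
  exact Finset.single_le_sum (fun k _ => le_of_lt (fseq_pos i N hd n k)) (Finset.mem_univ j)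

lemma fseq_rec (i : ℕ → Fin d) (N n : ℕ) (hn : n < N) :
    fseq i N n = fun j =>
      Mstep (i n) (fseq i N (n+1)) j / (∑ k, Mstep (i n) (fseq i N (n+1)) k) := by
  have h1 : N - n = (N - (n+1)) + 1 := by omega
  have h2 : N - ((N - (n+1)) + 1) = n := by omega
  show fseqAux i N (N - n) = _
  rw [h1]
  show (fun j => Mstep (i (N - ((N - (n+1)) + 1))) (fseqAux i N (N - (n+1))) j / _) = _
  rw [h2]
  rfl

lemma fseq_step_ge (i : ℕ → Fin d) (N n : ℕ) (hd : 0 < d) (hn : n < N) (j : Fin d) :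
    fseq i N (n+1) j / 2 ≤ fseq i N n j ∧ (j = i n → 1/2 ≤ fseq i N n j) := by
  have hrec := fseq_rec i N n hn
  set f' := fseq i N (n+1) with hf'
  have hsum' : ∑ k, f' k = 1 := fseq_sum i N hd (n+1)
  have hpos' : ∀ k, 0 < f' k := fseq_pos i N hd (n+1)
  have hle1' : ∀ k, f' k ≤ 1 := fseq_le_one i N hd (n+1)
  have hc : ∑ k, Mstep (i n) f' k = 2 - f' (i n) := sum_Mstep _ _ hsum'
  have hc1 : 1 ≤ ∑ k, Mstep (i n) f' k := by rw [hc]; linarith [hle1' (i n)]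
  have hc2 : ∑ k, Mstep (i n) f' k ≤ 2 := by rw [hc]; linarith [le_of_lt (hpos' (i n))]
  have hcpos : 0 < ∑ k, Mstep (i n) f' k := by linarith
  constructor
  · rw [hrec]
    show f' j / 2 ≤ Mstep (i n) f' j / _
    rcases eq_or_ne j (i n) with hji | hji
    · have hnum : Mstep (i n) f' j = 1 := by unfold Mstep; rw [if_pos hji, hsum']
      rw [hnum]
      have h1 : f' j / 2 ≤ 1 / 2 := by linarith [hle1' j]
      have h2 : (1:ℚ)/2 ≤ 1 / (∑ k, Mstep (i n) f' k) := by
        apply div_le_div_of_nonneg_left _ hcpos hc2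
        norm_num
      linarith
    · have hnum : Mstep (i n) f' j = f' j := by unfold Mstep; rw [if_neg hji]
      rw [hnum]
      apply div_le_div_of_nonneg_left (le_of_lt (hpos' j)) hcpos hc2
  · intro hji
    rw [hrec]
    show (1:ℚ)/2 ≤ Mstep (i n) f' j / _
    have hnum : Mstep (i n) f' j = 1 := by unfold Mstep; rw [if_pos hji, hsum']
    rw [hnum]
    apply div_le_div_of_nonneg_left _ hcpos hc2
    norm_num

lemma fseq_geom (i : ℕ → Fin d) (N n : ℕ) (hd : 0 < d) (j : Fin d) :
    ∀ t, n + t ≤ N → (1/2:ℚ)^t * fseq i N (n+t) j ≤ fseq i N n j := by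
  intro t
  induction t generalizing n with
  | zero => intro _; simp
  | succ t ih =>
    intro ht
    have h1 : fseq i N (n+1+t) j * (1/2:ℚ)^t ≤ fseq i N (n+1) j * 1 := by
      have := ih (n+1) (by omega)
      nlinarith [fseq_pos i N hd (n+1) j]
    have h2 := (fseq_step_ge i N n hd (by omega) j).1
    have hp : (0:ℚ) < (1/2:ℚ)^t := by positivity
    have hrw : n + (t+1) = n + 1 + t := by omega
    rw [hrw]
    calc (1/2:ℚ)^(t+1) * fseq i N (n+1+t) j
        = ((1/2:ℚ)^t * fseq i N (n+1+t) j) / 2 := by ring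
    _ ≤ fseq i N (n+1) j / 2 := by nlinarith [fseq_pos i N hd (n+1+t) j]
    _ ≤ fseq i N n j := h2

/-- uniform lower bound on used frequency vectors -/
lemma fseq_eps (i : ℕ → Fin d) (N n h : ℕ) (hd : 0 < d) (hh : 0 < h) (hnh : n + h ≤ N)
    (hcov : ∀ j : Fin d, ∃ s, s < h ∧ i (n + s) = j) (j : Fin d) :
    (1/2:ℚ)^h ≤ fseq i N n j := by
  obtain ⟨s, hs, hsj⟩ := hcov j
  have h1 : (1:ℚ)/2 ≤ fseq i N (n+s) j :=
    (fseq_step_ge i N (n+s) hd (by omega) j).2 hsj.symm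
  have h2 := fseq_geom i N n hd j s (by omega)
  have h3 : (1/2:ℚ)^h ≤ (1/2:ℚ)^(s+1) := by
    apply pow_le_pow_of_le_one (by norm_num) (by norm_num)
    omega
  have hp : (0:ℚ) < (1/2:ℚ)^s := by positivity
  calc (1/2:ℚ)^h ≤ (1/2:ℚ)^(s+1) := h3
  _ = (1/2:ℚ)^s * (1/2) := by ring
  _ ≤ (1/2:ℚ)^s * fseq i N (n+s) j := by nlinarith
  _ ≤ fseq i N n j := h2


section Desub
variable {d : ℕ} (i : ℕ → Fin d) (Ω : ℕ → ℕ → Fin d)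

/-- length of image of prefix of level n+1 word, of length t -/
def Lf (n t : ℕ) : ℕ := (applySub (ARsub d (i n)) (prefixW (Ω (n + 1)) t)).length

lemma Lf_succ (n t : ℕ) :
    Lf i Ω n (t + 1) = Lf i Ω n t + (if Ω (n + 1) t = i n then 1 else 2) := by
  unfold Lf
  rw [applySub_prefixW_succ, List.length_append]
  congr 1
  unfold ARsub; split <;> rfl

lemma Lf_zero (n : ℕ) : Lf i Ω n 0 = 0 := by simp [Lf, prefixW, applySub]

lemma Lf_lb (n t : ℕ) : t ≤ Lf i Ω n t := by
  induction t with
  | zero => simp [Lf_zero]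
  | succ t ih => rw [Lf_succ]; split <;> omega

lemma Lf_le_two (n t : ℕ) : Lf i Ω n (t+1) ≤ Lf i Ω n t + 2 := by
  rw [Lf_succ]; split <;> omega

def desub (n m : ℕ) : ℕ := Nat.findGreatest (fun t => Lf i Ω n t ≤ m) m

lemma desub_le (n m : ℕ) : desub i Ω n m ≤ m := Nat.findGreatest_le m

lemma desub_spec (n m : ℕ) : Lf i Ω n (desub i Ω n m) ≤ m :=
  Nat.findGreatest_spec (P := fun t => Lf i Ω n t ≤ m) (Nat.zero_le m) (by simp [Lf_zero])

lemma desub_gap (n m : ℕ) : m < Lf i Ω n (desub i Ω n m + 1) := by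
  by_contra hc
  push_neg at hc
  have h1 : desub i Ω n m + 1 ≤ m := le_trans (Lf_lb i Ω n _) hc
  exact Nat.findGreatest_is_greatest (Nat.lt_succ_self _) h1 hc

lemma desub_e (n m : ℕ) :
    m = Lf i Ω n (desub i Ω n m) ∨ m = Lf i Ω n (desub i Ω n m) + 1 := by
  have h1 := desub_spec i Ω n m
  have h2 := desub_gap i Ω n m
  have h3 := Lf_le_two i Ω n (desub i Ω n m)
  omega

variable (hS : ∀ n, SubstOfInf (ARsub d (i n)) (Ω (n + 1)) (Ω n))

include hS

lemma prefix_eq_image (n t : ℕ) :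
    prefixW (Ω n) (Lf i Ω n t) = applySub (ARsub d (i n)) (prefixW (Ω (n + 1)) t) := hS n t

/-- the letter of `Ω n` right after the image of a prefix is `i n`. -/
lemma letter_after (n t : ℕ) : Ω n (Lf i Ω n t) = i n := by
  have hlt : Lf i Ω n t < Lf i Ω n (t + 1) := by
    rw [Lf_succ]; split <;> omega
  have h1 := prefix_eq_image i Ω hS n (t + 1)
  have h2 : (prefixW (Ω n) (Lf i Ω n (t+1)))[Lf i Ω n t]? = some (Ω n (Lf i Ω n t)) := by
    simp [prefixW, List.getElem?_map, List.getElem?_range, hlt]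
  rw [h1, applySub_prefixW_succ] at h2
  rw [List.getElem?_append_right (by simp [Lf])] at h2
  simp only [Lf, Nat.sub_self] at h2
  rw [ARsub_eq] at h2
  simp at h2
  exact h2.symm

lemma first_letter (n : ℕ) : Ω n 0 = i n := by
  have := letter_after i Ω hS n 0
  rwa [Lf_zero] at this

/-- the two possible prefix decompositions -/
lemma prefix_decomp (n m : ℕ) :
    ∃ e ≤ 1, m = Lf i Ω n (desub i Ω n m) + e ∧
      prefixW (Ω n) m =
        applySub (ARsub d (i n)) (prefixW (Ω (n + 1)) (desub i Ω n m)) ++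
          (if e = 0 then [] else [i n]) := by
  rcases desub_e i Ω n m with he | he
  · refine ⟨0, by omega, by omega, ?_⟩
    simp only [if_pos rfl, List.append_nil]
    have h3 := prefix_eq_image i Ω hS n (desub i Ω n m)
    rw [← he] at h3
    simpa using h3
  · refine ⟨1, le_refl _, by omega, ?_⟩
    have h3 : prefixW (Ω n) (Lf i Ω n (desub i Ω n m) + 1)
        = applySub (ARsub d (i n)) (prefixW (Ω (n + 1)) (desub i Ω n m)) ++ [i n] := by
      rw [prefixW_succ, prefix_eq_image i Ω hS n, letter_after i Ω hS n]
    rw [← he] at h3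
    rw [h3]
    simp

/-- count relations for the desubstitution step -/
lemma step_counts (n m : ℕ) :
    ∃ e ≤ 1,
      ((prefixW (Ω n) m).count (i n) = desub i Ω n m + e) ∧
      (∀ j, j ≠ i n → (prefixW (Ω n) m).count j = (prefixW (Ω (n+1)) (desub i Ω n m)).count j) ∧
      (m + (prefixW (Ω (n+1)) (desub i Ω n m)).count (i n) = 2 * desub i Ω n m + e) := by
  obtain ⟨e, he1, hme, hdec⟩ := prefix_decomp i Ω hS n m
  refine ⟨e, he1, ?_, ?_, ?_⟩
  · rw [hdec, List.count_append, count_applySub, if_pos rfl, prefixW_length]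
    split
    · simp only [List.count_nil]; omega
    · simp only [List.count_cons, List.count_nil, beq_self_eq_true, if_true]
      omega
  · intro j hj
    rw [hdec, List.count_append, count_applySub, if_neg hj]
    split
    · simp
    · simp [List.count_cons, hj, Ne.symm hj]
  · have hL := length_applySub (i n) (prefixW (Ω (n+1)) (desub i Ω n m))
    rw [prefixW_length] at hL
    have : Lf i Ω n (desub i Ω n m) + (prefixW (Ω (n+1)) (desub i Ω n m)).count (i n)
        = 2 * desub i Ω n m := hL
    omega


/-- the chain of desubstituted prefix lengths -/
def mchain (m : ℕ) : ℕ → ℕ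
  | 0 => m
  | n + 1 => desub i Ω n (mchain m n)

omit hS in
lemma mchain_succ_le (m n : ℕ) : mchain i Ω m (n + 1) ≤ mchain i Ω m n := desub_le i Ω _ _

omit hS in
lemma mchain_anti (m : ℕ) {n n' : ℕ} (hnn : n ≤ n') : mchain i Ω m n' ≤ mchain i Ω m n := by
  induction n' with
  | zero =>
    have : n = 0 := by omega
    simp [this]
  | succ k ih =>
    rcases Nat.lt_or_ge n (k+1) with hlt | hge
    · exact le_trans (mchain_succ_le i Ω m k) (ih (by omega))
    · have : n = k + 1 := by omega
      simp [this]

/-- if the prefix length does not drop, the directive letter repeats -/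
lemma stall (n m : ℕ) (hm : 1 ≤ m) (heq : desub i Ω n m = m) : i (n + 1) = i n := by
  obtain ⟨e, he1, h1, h2, h3⟩ := step_counts i Ω hS n m
  rw [heq] at h3
  -- count of (i n) in prefix of length m of Ω (n+1) equals m
  have hcnt : (prefixW (Ω (n+1)) m).count (i n) = m := by
    have hle : (prefixW (Ω (n+1)) m).count (i n) ≤ m := by
      have := List.count_le_length (l := prefixW (Ω (n+1)) m) (a := i n)
      rwa [prefixW_length] at this
    omega
  have hall : ∀ b ∈ prefixW (Ω (n+1)) m, i n = b := by
    rw [← List.count_eq_length]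
    rw [hcnt, prefixW_length]
  have hmem : Ω (n+1) 0 ∈ prefixW (Ω (n+1)) m := by
    simp only [prefixW, List.mem_map]
    exact ⟨0, by simp; omega, rfl⟩
  have := hall _ hmem
  rw [first_letter i Ω hS (n+1)] at this
  exact this.symm


variable (h : ℕ) (hw : ∀ n : ℕ, Finset.image (fun t => i (n + t)) (Finset.range h) = Finset.univ)

include hw

omit hS in
lemma i_const_card (hd : 2 ≤ d) (n : ℕ) (hcon : ∀ t < h, i (n + t) = i n) : False := by
  have h1 : (Finset.univ : Finset (Fin d)) ⊆ {i n} := by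
    rw [← hw n]
    intro x hx
    simp only [Finset.mem_image, Finset.mem_range] at hx
    obtain ⟨t, ht, rfl⟩ := hx
    simp [hcon t ht]
  have h2 := Finset.card_le_card h1
  simp [Finset.card_univ] at h2
  omega

lemma window_decrease (hd : 2 ≤ d) (m n : ℕ) (hm : 1 ≤ mchain i Ω m n) :
    mchain i Ω m (n + h) < mchain i Ω m n := by
  by_contra hc
  push_neg at hc
  have heqall : ∀ s ≤ h, mchain i Ω m (n + s) = mchain i Ω m n := by
    intro s hs
    have l1 := mchain_anti i Ω m (show n ≤ n + s by omega)
    have l2 := mchain_anti i Ω m (show n + s ≤ n + h by omega)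
    omega
  have hstall : ∀ s < h, i (n + s + 1) = i (n + s) := by
    intro s hs
    have e1 : mchain i Ω m (n + s) = mchain i Ω m n := heqall s (by omega)
    have e2 : mchain i Ω m (n + s + 1) = mchain i Ω m n := heqall (s+1) (by omega)
    have : desub i Ω (n + s) (mchain i Ω m (n + s)) = mchain i Ω m (n + s) := by
      show mchain i Ω m ((n + s) + 1) = _
      omega
    exact stall i Ω hS (n + s) (mchain i Ω m (n + s)) (by omega) this
  have hcon : ∀ t < h, i (n + t) = i n := by
    intro t ht
    induction t with
    | zero => rfl
    | succ s ih =>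
      have := hstall s (by omega)
      rw [show n + (s+1) = n + s + 1 by omega, this]
      exact ih (by omega)
  exact i_const_card i h hw hd n hcon

lemma mchain_windows_zero (hd : 2 ≤ d) (m : ℕ) : mchain i Ω m (h * m) = 0 := by
  have key : ∀ t, mchain i Ω m (h * t) = 0 ∨ mchain i Ω m (h * t) + t ≤ m := by
    intro t
    induction t with
    | zero => right; simp [mchain]
    | succ t ih =>
      rcases ih with h0 | hle
      · left
        have := mchain_anti i Ω m (show h * t ≤ h * (t+1) by nlinarith)
        omega
      · rcases Nat.eq_zero_or_pos (mchain i Ω m (h * t)) with h0 | hpos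
        · left
          have := mchain_anti i Ω m (show h * t ≤ h * (t+1) by nlinarith)
          omega
        · have hdec := window_decrease i Ω hS h hw hd m (h * t) hpos
          rw [show h * t + h = h * (t + 1) by ring] at hdec
          omega
  rcases key m with h0 | hle
  · exact h0
  · omega

end Desub

section Main

variable {d : ℕ} (i : ℕ → Fin d) (Ω : ℕ → ℕ → Fin d)

/-- deviation vector of the prefix at level n along the desubstitution chain -/
def gv (N m n : ℕ) : Fin d → ℚ :=
  fun j => ((prefixW (Ω n) (mchain i Ω m n)).count j : ℚ)
    - (mchain i Ω m n : ℚ) * fseq i N n j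

lemma gv_sum (N m n : ℕ) (hd : 0 < d) : ∑ j, gv i Ω N m n j = 0 := by
  unfold gv
  rw [Finset.sum_sub_distrib, ← Finset.mul_sum, fseq_sum i N hd n, ← Nat.cast_sum,
    sum_count, prefixW_length]
  ring

lemma gv_step (hS : ∀ n, SubstOfInf (ARsub d (i n)) (Ω (n + 1)) (Ω n))
    (N m n : ℕ) (hd : 0 < d) (hn : n < N) :
    ∃ e : ℚ, 0 ≤ e ∧ e ≤ 1 ∧
      gv i Ω N m n = fun j => Tmap (i n) (fseq i N n) (gv i Ω N m (n + 1)) j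
        + errv (i n) (fseq i N n) e j := by
  obtain ⟨e, he1, hca, hcj, hck⟩ := step_counts i Ω hS n (mchain i Ω m n)
  have hm' : mchain i Ω m (n+1) = desub i Ω n (mchain i Ω m n) := rfl
  refine ⟨e, by positivity, by exact_mod_cast he1, ?_⟩
  funext j
  have hsum' : ∑ k, fseq i N (n+1) k = 1 := fseq_sum i N hd (n+1)
  have hMa : Mstep (i n) (fseq i N (n+1)) (i n) = 1 := by
    unfold Mstep; rw [if_pos rfl, hsum']
  have hc : ∑ k, Mstep (i n) (fseq i N (n+1)) k = 2 - fseq i N (n+1) (i n) :=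
    sum_Mstep _ _ hsum'
  have hcpos : (0:ℚ) < 2 - fseq i N (n+1) (i n) := by
    have := fseq_le_one i N hd (n+1) (i n); linarith
  have hfrec := fseq_rec i N n hn
  -- cast key relation
  have hckq : (mchain i Ω m n : ℚ) + ((prefixW (Ω (n+1)) (mchain i Ω m (n+1))).count (i n) : ℚ)
      = 2 * (mchain i Ω m (n+1) : ℚ) + e := by
    rw [hm']; exact_mod_cast hck
  show ((prefixW (Ω n) (mchain i Ω m n)).count j : ℚ) - _ = _
  rcases eq_or_ne j (i n) with hja | hja
  · rw [hja]
    have hcaq : ((prefixW (Ω n) (mchain i Ω m n)).count (i n) : ℚ)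
        = (mchain i Ω m (n+1) : ℚ) + e := by
      rw [hm']; exact_mod_cast hca
    rw [hcaq]
    unfold Tmap errv gv
    rw [if_pos rfl, if_pos rfl, hfrec]
    simp only
    rw [hMa, hc]
    field_simp
    linear_combination -hckq
  · have hcjq : ((prefixW (Ω n) (mchain i Ω m n)).count j : ℚ)
        = ((prefixW (Ω (n+1)) (mchain i Ω m (n+1))).count j : ℚ) := by
      rw [hm']; exact_mod_cast hcj j hja
    rw [hcjq]
    unfold Tmap errv gv
    rw [if_neg hja, if_neg hja, hfrec]
    simp only
    have hMj : Mstep (i n) (fseq i N (n+1)) j = fseq i N (n+1) j := by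
      unfold Mstep; rw [if_neg hja]
    rw [hMj, hc]
    field_simp
    linear_combination (-(fseq i N (n+1) j)) * hckq

lemma gv_chain_err (hS : ∀ n, SubstOfInf (ARsub d (i n)) (Ω (n + 1)) (Ω n))
    (N m : ℕ) (hd : 0 < d) :
    ∀ s n, n + s ≤ N →
      nrm1 (fun j => gv i Ω N m n j - chainT i (fseq i N) n s (gv i Ω N m (n + s)) j)
        ≤ 2 * s := by
  intro s
  induction s with
  | zero =>
    intro n _
    have : (fun j => gv i Ω N m n j - chainT i (fseq i N) n 0 (gv i Ω N m (n + 0)) j)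
        = fun _ => (0:ℚ) := by
      funext j; rw [chainT_zero]; simp
    rw [this, nrm1_zero]
    simp
  | succ s ih =>
    intro n hns
    obtain ⟨e, he0, he1, hstep⟩ := gv_step i Ω hS N m n hd (by omega)
    have hidx : n + (s + 1) = (n + 1) + s := by omega
    have hfp : ∀ k, 0 ≤ fseq i N n k := fun k => le_of_lt (fseq_pos i N hd n k)
    have hfs : ∑ k, fseq i N n k = 1 := fseq_sum i N hd n
    have heq : (fun j => gv i Ω N m n j - chainT i (fseq i N) n (s+1) (gv i Ω N m (n + (s+1))) j)
        = fun j => Tmap (i n) (fseq i N n)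
            (fun k => gv i Ω N m (n+1) k
              - chainT i (fseq i N) (n+1) s (gv i Ω N m ((n+1) + s)) k) j
          + errv (i n) (fseq i N n) e j := by
      rw [hidx, hstep]
      funext j
      rw [chainT_succ, Tmap_sub]
      simp only
      ring
    rw [heq]
    calc nrm1 _ ≤ nrm1 (Tmap (i n) (fseq i N n)
            (fun k => gv i Ω N m (n+1) k
              - chainT i (fseq i N) (n+1) s (gv i Ω N m ((n+1) + s)) k))
          + nrm1 (errv (i n) (fseq i N n) e) := nrm1_triangle _ _
    _ ≤ 2 * s + 2 := by
        have h1 := Tmap_nonexp (i n) (fseq i N n)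
          (fun k => gv i Ω N m (n+1) k
            - chainT i (fseq i N) (n+1) s (gv i Ω N m ((n+1) + s)) k) hfp hfs
        have h2 := ih (n+1) (by omega)
        have h3 := nrm1_errv (i n) (fseq i N n) e he0 he1 hfp hfs
        linarith
    _ = 2 * (s + 1 : ℕ) := by push_cast; ring

lemma sub_add_nrm (x y : Fin d → ℚ) : nrm1 x ≤ nrm1 (fun j => x j - y j) + nrm1 y := by
  have h1 := nrm1_triangle (fun j => x j - y j) y
  have h2 : (fun j => (x j - y j) + y j) = x := by funext j; ring
  rw [h2] at h1
  exact h1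

lemma cover_of_window (h : ℕ)
    (hw : ∀ n : ℕ, Finset.image (fun t => i (n + t)) (Finset.range h) = Finset.univ)
    (k : ℕ) (j : Fin d) : ∃ s, s < h ∧ i (k + s) = j := by
  have hj : j ∈ Finset.image (fun t => i (k + t)) (Finset.range h) := by
    rw [hw k]; exact Finset.mem_univ j
  simp only [Finset.mem_image, Finset.mem_range] at hj
  obtain ⟨s, hs1, hs2⟩ := hj
  exact ⟨s, hs1, hs2⟩

lemma gv_window (hS : ∀ n, SubstOfInf (ARsub d (i n)) (Ω (n + 1)) (Ω n)) (h : ℕ)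
    (hw : ∀ n : ℕ, Finset.image (fun t => i (n + t)) (Finset.range h) = Finset.univ)
    (hd : 0 < d) (hh : 0 < h) (N m n : ℕ) (hnN : n + 2 * h ≤ N) :
    nrm1 (gv i Ω N m n) ≤
      (1 - (1/2:ℚ)^h / (2 * d * h)) * nrm1 (gv i Ω N m (n + h)) + 2 * h := by
  have herr := gv_chain_err i Ω hS N m hd h n (by omega)
  have hF : ∀ k, n ≤ k → k < n + h → (∀ j, 0 ≤ fseq i N k j) ∧ (∑ j, fseq i N k j = 1)
      ∧ (∀ j, (1/2:ℚ)^h ≤ fseq i N k j) := by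
    intro k h1 h2
    exact ⟨fun j => le_of_lt (fseq_pos i N hd k j), fseq_sum i N hd k,
      fun j => fseq_eps i N k h hd hh (by omega) (cover_of_window i h hw k) j⟩
  have heps1 : ((1:ℚ)/2)^h ≤ 1/2 := by
    calc ((1:ℚ)/2)^h ≤ ((1:ℚ)/2)^1 := pow_le_pow_of_le_one (by norm_num) (by norm_num) hh
    _ = 1/2 := pow_one _
  have hcontr := window_contract i (fseq i N) h n hd hh ((1/2:ℚ)^h) (by positivity) heps1
    hF (cover_of_window i h hw n) (gv i Ω N m (n + h)) (gv_sum i Ω N m (n + h) hd)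
  have htri := sub_add_nrm (gv i Ω N m n) (chainT i (fseq i N) n h (gv i Ω N m (n + h)))
  linarith

lemma gv_head (hS : ∀ n, SubstOfInf (ARsub d (i n)) (Ω (n + 1)) (Ω n)) (h : ℕ)
    (hw : ∀ n : ℕ, Finset.image (fun t => i (n + t)) (Finset.range h) = Finset.univ)
    (hd2 : 2 ≤ d) (hh : 0 < h) (N m : ℕ) (hN : h * m + 2 * h ≤ N) :
    nrm1 (gv i Ω N m 0) ≤ 4 * d * h^2 * (2:ℚ)^h := by
  have hd : 0 < d := by omega
  have hdq : (0:ℚ) < d := by exact_mod_cast hd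
  have hhq : (0:ℚ) < h := by exact_mod_cast hh
  set B : ℚ := 4 * d * h^2 * (2:ℚ)^h with hB
  set δ : ℚ := (1/2:ℚ)^h / (2 * d * h) with hδ
  have hδpos : 0 < δ := by rw [hδ]; positivity
  have hpow : ((1/2:ℚ)^h) * (2:ℚ)^h = 1 := by
    rw [← mul_pow]; norm_num
  have hδle1 : δ ≤ 1 := by
    rw [hδ]
    rw [div_le_one (by positivity)]
    have h1 : ((1:ℚ)/2)^h ≤ 1 := by
      apply pow_le_one₀ (by norm_num) (by norm_num)
    have h2 : (1:ℚ) ≤ d := by exact_mod_cast hd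
    have h3 : (1:ℚ) ≤ h := by exact_mod_cast hh
    nlinarith
  have hδB : δ * B = 2 * h := by
    have h1 : δ * B = ((1/2:ℚ)^h * (2:ℚ)^h) * ((4 * d * h^2) / (2 * d * h)) := by
      rw [hδ, hB]; ring
    rw [hpow, one_mul] at h1
    rw [h1]
    field_simp
    ring
  have hBnn : 0 ≤ B := by rw [hB]; positivity
  have key : ∀ t, t ≤ m → nrm1 (gv i Ω N m (h * (m - t))) ≤ B := by
    intro t
    induction t with
    | zero =>
      intro _
      have hm0 : mchain i Ω m (h * (m - 0)) = 0 := by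
        simpa using mchain_windows_zero i Ω hS h hw hd2 m
      have h0 : gv i Ω N m (h * (m - 0)) = fun _ => 0 := by
        unfold gv
        rw [hm0]
        funext j
        simp [prefixW]
      rw [h0, nrm1_zero]
      exact hBnn
    | succ t ih =>
      intro ht1
      have hidx : h * (m - (t+1)) + h = h * (m - t) := by
        rw [← Nat.mul_succ]
        congr 1
        omega
      have hb1 := gv_window i Ω hS h hw hd hh N m (h * (m - (t+1))) (by
        have : m - (t+1) ≤ m := by omega
        have := Nat.mul_le_mul_left h this
        omega)
      rw [hidx] at hb1
      have hb2 := ih (by omega)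
      have hmono : (1 - δ) * nrm1 (gv i Ω N m (h * (m - t))) ≤ (1 - δ) * B := by
        apply mul_le_mul_of_nonneg_left hb2
        linarith
      calc nrm1 (gv i Ω N m (h * (m - (t+1))))
          ≤ (1 - δ) * nrm1 (gv i Ω N m (h * (m - t))) + 2 * h := by
            rw [hδ] at hmono ⊢
            exact hb1
      _ ≤ (1 - δ) * B + 2 * h := by linarith
      _ = B := by
          have : (1 - δ) * B + 2 * h = B - δ * B + 2 * h := by ring
          rw [this, hδB]
          ring
  have := key m (le_refl m)
  simpa using this

end Main

set_option maxHeartbeats 1000000 in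
theorem balanced_main (h : ℕ) (d : ℕ) (i : ℕ → Fin d) (ω : ℕ → Fin d) (Ω : ℕ → ℕ → Fin d)
    (hw : ∀ n : ℕ, Finset.image (fun t => i (n + t)) (Finset.range h) = Finset.univ)
    (hΩ0 : Ω 0 = ω)
    (hS : ∀ n : ℕ, SubstOfInf (ARsub d (i n)) (Ω (n + 1)) (Ω n)) :
    BalancedWord (16 * h^3 * 2^h) ω := by
  intro u v hu hv hlen j0
  -- degenerate alphabets
  rcases Nat.lt_or_ge d 2 with hdlt | hd2
  · interval_cases d
    · exact (i 0).elim0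
    · -- one letter: counts are lengths
      have hcu : u.count j0 = u.length := List.count_eq_length.mpr (fun b _ => Subsingleton.elim _ _)
      have hcv : v.count j0 = v.length := List.count_eq_length.mpr (fun b _ => Subsingleton.elim _ _)
      rw [hcu, hcv, hlen]
      simp
  -- main case
  have hdh : d ≤ h := by
    have h1 : (Finset.image (fun t => i (0 + t)) (Finset.range h)).card ≤ h := by
      calc (Finset.image (fun t => i (0 + t)) (Finset.range h)).card
          ≤ (Finset.range h).card := Finset.card_image_le
      _ = h := Finset.card_range h
    rw [hw 0] at h1
    simpa [Finset.card_univ] using h1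
  have hh : 0 < h := by omega
  have hd : 0 < d := by omega
  obtain ⟨k, hk⟩ := hu
  obtain ⟨k', hk'⟩ := hv
  set ℓ := u.length with hℓ
  have hℓv : v.length = ℓ := hlen.symm
  set K := k + k' + 2 * ℓ with hK
  set N := h * K + 2 * h with hN
  -- prefix splitting
  have hsplit : ∀ (kk : ℕ) (w : List (Fin d)), w = (List.range w.length).map (fun t => ω (kk + t)) →
      ∀ j : Fin d, (prefixW ω (kk + w.length)).count j = (prefixW ω kk).count j + w.count j := by
    intro kk w hwph j
    rw [prefixW_add, List.count_append, ← hwph]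
  have hcu := hsplit k u hk j0
  have hcv := hsplit k' v hk' j0
  -- gv bounds for the four prefixes
  have hBnd : ∀ mv : ℕ, mv ≤ K → |gv i Ω N mv 0 j0| ≤ 4 * d * h^2 * (2:ℚ)^h := by
    intro mv hmv
    have h1 : h * mv + 2 * h ≤ N := by
      have := Nat.mul_le_mul_left h hmv
      omega
    calc |gv i Ω N mv 0 j0| ≤ nrm1 (gv i Ω N mv 0) := abs_le_nrm1 _ _
    _ ≤ 4 * d * h^2 * (2:ℚ)^h := gv_head i Ω hS h hw hd2 hh N mv h1
  -- express counts via gv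
  have hgv0 : ∀ mv : ℕ, ((prefixW ω mv).count j0 : ℚ) = gv i Ω N mv 0 j0 + mv * fseq i N 0 j0 := by
    intro mv
    unfold gv
    rw [show mchain i Ω mv 0 = mv from rfl, hΩ0]
    ring
  set B : ℚ := 4 * d * h^2 * (2:ℚ)^h with hB
  have q1 := hBnd (k + ℓ) (by omega)
  have q2 := hBnd k (by omega)
  have q3 := hBnd (k' + ℓ) (by omega)
  have q4 := hBnd k' (by omega)
  have e1 : ((prefixW ω (k + ℓ)).count j0 : ℚ) = gv i Ω N (k+ℓ) 0 j0 + (k+ℓ) * fseq i N 0 j0 := by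
    have := hgv0 (k + ℓ); push_cast at this ⊢; linarith [this]
  have e2 := hgv0 k
  have e3 : ((prefixW ω (k' + ℓ)).count j0 : ℚ) = gv i Ω N (k'+ℓ) 0 j0 + (k'+ℓ) * fseq i N 0 j0 := by
    have := hgv0 (k' + ℓ); push_cast at this ⊢; linarith [this]
  have e4 := hgv0 k'
  -- counts of u and v in ℚ
  have huq : (u.count j0 : ℚ) = ((prefixW ω (k + ℓ)).count j0 : ℚ) - ((prefixW ω k).count j0 : ℚ) := by
    have := hcu; rw [← hℓ] at this; push_cast [this]; ring
  have hvq : (v.count j0 : ℚ) = ((prefixW ω (k' + ℓ)).count j0 : ℚ) - ((prefixW ω k').count j0 : ℚ) := by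
    have h5 := hcv
    rw [hℓv] at h5
    push_cast [h5]; ring
  have hdiff : (u.count j0 : ℚ) - (v.count j0 : ℚ)
      = gv i Ω N (k+ℓ) 0 j0 - gv i Ω N k 0 j0 - gv i Ω N (k'+ℓ) 0 j0 + gv i Ω N k' 0 j0 := by
    rw [huq, hvq, e1, e2, e3, e4]
    push_cast
    ring
  have habs : |(u.count j0 : ℚ) - (v.count j0 : ℚ)| ≤ 4 * B := by
    rw [hdiff]
    have a1 := abs_le.mp q1
    have a2 := abs_le.mp q2
    have a3 := abs_le.mp q3
    have a4 := abs_le.mp q4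
    rw [abs_le]
    constructor
    · linarith [a1.1, a2.2, a3.2, a4.1]
    · linarith [a1.2, a2.1, a3.1, a4.2]
  -- 4B ≤ C
  have hC : 4 * B ≤ ((16 * h^3 * 2^h : ℕ) : ℚ) := by
    rw [hB]
    push_cast
    have hdq : (d:ℚ) ≤ h := by exact_mod_cast hdh
    have hhq : (0:ℚ) < h := by exact_mod_cast hh
    have key : (d:ℚ) * ((h:ℚ)^2 * (2:ℚ)^h) ≤ (h:ℚ) * ((h:ℚ)^2 * (2:ℚ)^h) :=
      mul_le_mul_of_nonneg_right hdq (by positivity)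
    nlinarith [key]
  have hfin : |(u.count j0 : ℚ) - (v.count j0 : ℚ)| ≤ ((16 * h^3 * 2^h : ℕ) : ℚ) :=
    le_trans habs hC
  have : |(u.count j0 : ℤ) - (v.count j0 : ℤ)| ≤ ((16 * h^3 * 2^h : ℕ) : ℤ) := by
    exact_mod_cast hfin
  exact this

end AR9

theorem stmt9 (h : ℕ) :
    ∃ C : ℕ, ∀ (d : ℕ) (i : ℕ → Fin d) (ω : ℕ → Fin d) (Ω : ℕ → ℕ → Fin d),
      (∀ n : ℕ, Finset.image (fun t => i (n + t)) (Finset.range h) = Finset.univ) →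
      Ω 0 = ω →
      (∀ n : ℕ, SubstOfInf (ARsub d (i n)) (Ω (n + 1)) (Ω n)) →
      BalancedWord C ω := by
  refine ⟨16 * h^3 * 2^h, ?_⟩
  intro d i ω Ω hw hΩ0 hS
  exact AR9.balanced_main h d i ω Ω hw hΩ0 hS
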